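/- Let G be a simple mixed graph on n vertices with e edges and a arcs, and let 𝓘(G) be its integrated adjacency matrix with eigenvalues in nonincreasing order. Then λ_{2n−1}(𝓘(G)) ≤ (2e+a)/n ≤ λ₁(𝓘(G)) and λ_{2n}(𝓘(G)) ≤ (2e−a)/n ≤ λ₂(𝓘(G)). -/

import Mathlib

open Matrix Polynomial

section Helpers
variable {S : Type*} [Fintype S] [DecidableEq S]

lemma charmatrix_conj' (U D : Matrix S S ℝ) (hU : U ∈ Matrix.unitaryGroup S ℝ) :
    charmatrix (U * D * star U) = U.map C * charmatrix D * (star U).map C := by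
  have h1 : U * star U = 1 := (Matrix.mem_unitaryGroup_iff).mp hU
  have hsc : Matrix.scalar S (X : ℝ[X]) = (X : ℝ[X]) • (1 : Matrix S S ℝ[X]) := by
    simp [Matrix.scalar_apply, Matrix.smul_eq_diagonal_mul]
  simp only [charmatrix, RingHom.mapMatrix_apply]
  rw [mul_sub, sub_mul]
  congr 1
  · rw [hsc, Matrix.mul_smul, Matrix.smul_mul, mul_one, ← Matrix.map_mul, h1]
    simp
  · rw [Matrix.map_mul, Matrix.map_mul]

lemma charpoly_conj' (U D : Matrix S S ℝ) (hU : U ∈ Matrix.unitaryGroup S ℝ) :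
    (U * D * star U).charpoly = D.charpoly := by
  rw [Matrix.charpoly, charmatrix_conj' U D hU, Matrix.charpoly, det_mul, det_mul,
    mul_comm, ← mul_assoc, ← det_mul, ← Matrix.map_mul]
  rw [show star U * U = 1 from mem_unitaryGroup_iff'.mp hU]
  simp

lemma charpoly_diagonal' (d : S → ℝ) :
    (Matrix.diagonal d).charpoly = ∏ i, (X - C (d i)) := by
  have : charmatrix (Matrix.diagonal d) = Matrix.diagonal (fun i => X - C (d i)) := by
    ext i j
    by_cases h : i = j <;>
      simp [charmatrix, Matrix.diagonal, h, Matrix.one_apply, RingHom.mapMatrix_apply]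
  rw [Matrix.charpoly, this, det_diagonal]

lemma charpoly_eq_prod' {M : Matrix S S ℝ} (hM : M.IsHermitian) :
    M.charpoly = ∏ i, (X - C (hM.eigenvalues i)) := by
  conv_lhs => rw [hM.spectral_theorem]
  rw [Unitary.conjStarAlgAut_apply]
  rw [charpoly_conj' _ _ (hM.eigenvectorUnitary).2]
  rw [show (RCLike.ofReal ∘ hM.eigenvalues : S → ℝ) = hM.eigenvalues by ext; simp,
    charpoly_diagonal']

lemma dot_expand (u : S → S → ℝ) (hu : ∀ i j, u i ⬝ᵥ u j = if i = j then 1 else 0)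
    (c d : S → ℝ) :
    (∑ i, c i • u i) ⬝ᵥ (∑ j, d j • u j) = ∑ i, c i * d i := by
  simp only [dotProduct, Finset.sum_apply, Pi.smul_apply, smul_eq_mul] at hu ⊢
  calc ∑ s, (∑ i, c i * u i s) * (∑ j, d j * u j s)
      = ∑ s, ∑ i, ∑ j, c i * d j * (u i s * u j s) := by
        refine Finset.sum_congr rfl fun s _ => ?_
        rw [Finset.sum_mul_sum]
        exact Finset.sum_congr rfl fun i _ => Finset.sum_congr rfl fun j _ => by ring
    _ = ∑ i, ∑ j, c i * d j * (∑ s, u i s * u j s) := by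
        rw [Finset.sum_comm]
        refine Finset.sum_congr rfl fun i _ => ?_
        rw [Finset.sum_comm]
        exact Finset.sum_congr rfl fun j _ => (Finset.mul_sum _ _ _).symm
    _ = ∑ i, c i * d i := by
        refine Finset.sum_congr rfl fun i _ => ?_
        rw [Finset.sum_eq_single i (fun j _ hj => by rw [hu i j]; simp [Ne.symm hj])
          (by simp)]
        rw [hu i i]; simp

omit [DecidableEq S] in
lemma mulVec_expand (M : Matrix S S ℝ) (ev : S → ℝ) (u : S → S → ℝ)
    (hMu : ∀ i, M *ᵥ u i = ev i • u i) (c : S → ℝ) :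
    M *ᵥ (∑ i, c i • u i) = ∑ i, (c i * ev i) • u i := by
  ext s
  simp only [Matrix.mulVec, dotProduct, Finset.sum_apply, Pi.smul_apply,
    smul_eq_mul, Finset.mul_sum]
  rw [Finset.sum_comm]
  refine Finset.sum_congr rfl fun i _ => ?_
  have h := congrFun (hMu i) s
  simp only [Matrix.mulVec, dotProduct, Pi.smul_apply, smul_eq_mul] at h
  calc ∑ t, M s t * (c i * u i t) = c i * ∑ t, M s t * u i t := by
        rw [Finset.mul_sum]; exact Finset.sum_congr rfl fun t _ => by ring
    _ = c i * ev i * u i s := by rw [h]; ring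

lemma eig_expand {M : Matrix S S ℝ} (hM : M.IsHermitian) (v : S → ℝ) :
    ∃ c : S → ℝ,
      (hM.eigenvectorBasis.repr ((WithLp.equiv 2 (S → ℝ)).symm v) = c) ∧
      v ⬝ᵥ (M *ᵥ v) = ∑ i, hM.eigenvalues i * c i ^ 2 ∧
      v ⬝ᵥ v = ∑ i, c i ^ 2 := by
  set b := hM.eigenvectorBasis with hbdef
  set w : EuclideanSpace ℝ S := (WithLp.equiv 2 (S → ℝ)).symm v with hw
  refine ⟨fun i => b.repr w i, rfl, ?_⟩
  set c : S → ℝ := fun i => b.repr w i with hc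
  set u : S → S → ℝ := fun i => WithLp.equiv 2 (S → ℝ) (b i) with hudef
  have hu : ∀ i j, u i ⬝ᵥ u j = if i = j then 1 else 0 := by
    intro i j
    have := (orthonormal_iff_ite.mp b.orthonormal) i j
    simpa [dotProduct, PiLp.inner_apply, RCLike.inner_apply, mul_comm, u] using this
  have hMu : ∀ i, M *ᵥ u i = hM.eigenvalues i • u i := fun i => hM.mulVec_eigenvectorBasis i
  have hv : v = ∑ i, c i • u i := by
    have h2 := congrArg (WithLp.linearEquiv 2 ℝ (S → ℝ)) (b.sum_repr w).symm
    rw [map_sum] at h2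
    simpa [WithLp.linearEquiv, u, c, hw] using h2
  constructor
  · rw [hv, mulVec_expand M _ u hMu c, dot_expand u hu]
    exact Finset.sum_congr rfl fun i _ => by ring
  · rw [hv, dot_expand u hu]
    exact Finset.sum_congr rfl fun i _ => by ring

omit [DecidableEq S] in
lemma exists_ge (ev c : S → ℝ) (r : ℝ) (hR : 0 < ∑ i, c i ^ 2)
    (ht : r * (∑ i, c i ^ 2) ≤ ∑ i, ev i * c i ^ 2) : ∃ i, r ≤ ev i := by
  by_contra h
  push_neg at h
  obtain ⟨i₁, hi₁⟩ : ∃ i, c i ≠ 0 := by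
    by_contra hz; push_neg at hz
    simp only [hz, ne_eq] at hR
    simp [hz] at hR
  have hlt : ∑ i, ev i * c i ^ 2 < ∑ i, r * c i ^ 2 := by
    refine Finset.sum_lt_sum (fun i _ => ?_) ⟨i₁, Finset.mem_univ _, ?_⟩
    · exact mul_le_mul_of_nonneg_right (h i).le (sq_nonneg _)
    · exact mul_lt_mul_of_pos_right (h i₁) (lt_of_le_of_ne (sq_nonneg _) (Ne.symm (pow_ne_zero _ hi₁)))
  rw [← Finset.mul_sum] at hlt
  linarith

omit [DecidableEq S] in
lemma two_ge (ev c : S → ℝ) (r : ℝ) (i₀ : S) (hc0 : c i₀ = 0)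
    (hR : 0 < ∑ i, c i ^ 2)
    (ht : r * (∑ i, c i ^ 2) ≤ ∑ i, ev i * c i ^ 2) : ∃ i, i ≠ i₀ ∧ r ≤ ev i := by
  by_contra h
  push_neg at h
  obtain ⟨i₁, hi₁⟩ : ∃ i, i ≠ i₀ ∧ c i ≠ 0 := by
    by_contra hz; push_neg at hz
    have : ∀ i, c i = 0 := by
      intro i
      by_cases hii : i = i₀
      · rw [hii]; exact hc0
      · exact hz i hii
    simp [this] at hR
  have hlt : ∑ i, ev i * c i ^ 2 < ∑ i, r * c i ^ 2 := by
    refine Finset.sum_lt_sum (fun i _ => ?_) ⟨i₁, Finset.mem_univ _, ?_⟩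
    · by_cases hii : i = i₀
      · rw [hii, hc0]; simp
      · exact mul_le_mul_of_nonneg_right (h i hii).le (sq_nonneg _)
    · exact mul_lt_mul_of_pos_right (h i₁ hi₁.1) (lt_of_le_of_ne (sq_nonneg _) (Ne.symm (pow_ne_zero _ hi₁.2)))
  rw [← Finset.mul_sum] at hlt
  linarith

end Helpers

set_option maxHeartbeats 1000000 in
/-- For a simple mixed graph `G` on `n ≥ 1` vertices with `e` edges and `a` arcs, the
eigenvalues of `𝓘(G) = [[A, B], [Bᵀ, A]]` in nonincreasing order satisfy
`λ_{2n−1} ≤ (2e+a)/n ≤ λ₁` and `λ_{2n} ≤ (2e−a)/n ≤ λ₂`. -/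
theorem stmt16 {n : ℕ} (hn : 0 < n) (A B : Matrix (Fin n) (Fin n) ℝ) (e a : ℕ)
    (hA : A.IsSymm) (hAdiag : ∀ i, A i i = 0) (hBdiag : ∀ i, B i i = 0)
    (hA01 : ∀ i j, A i j = 0 ∨ A i j = 1)
    (hB01 : ∀ i j, B i j = 0 ∨ B i j = 1)
    (he : ∑ i, ∑ j, A i j = 2 * (e : ℝ))
    (ha : ∑ i, ∑ j, B i j = (a : ℝ))
    (μ : Fin (2 * n) → ℝ) (hμa : Antitone μ)
    (hμ : (Matrix.fromBlocks A B Bᵀ A).charpoly = ∏ i, (X - C (μ i))) :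
    (μ ⟨2 * n - 2, by omega⟩ ≤ (2 * (e : ℝ) + a) / n ∧
      (2 * (e : ℝ) + a) / n ≤ μ ⟨0, by omega⟩) ∧
    (μ ⟨2 * n - 1, by omega⟩ ≤ (2 * (e : ℝ) - a) / n ∧
      (2 * (e : ℝ) - a) / n ≤ μ ⟨1, by omega⟩) := by
  have hAsymm : ∀ i j, A j i = A i j := fun i j => congrFun (congrFun hA i) j
  set M : Matrix (Fin n ⊕ Fin n) (Fin n ⊕ Fin n) ℝ := Matrix.fromBlocks A B Bᵀ A with hMdef
  have hM : M.IsHermitian := by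
    ext i j
    rcases i with i | i <;> rcases j with j | j <;>
      simp [M, Matrix.conjTranspose_apply, hAsymm]
  set ev : (Fin n ⊕ Fin n) → ℝ := hM.eigenvalues with hev
  -- multiset of μ equals multiset of eigenvalues
  have hprod : (Multiset.map (fun r : ℝ => X - C r) (Multiset.map μ Finset.univ.val)).prod
      = (Multiset.map (fun r : ℝ => X - C r) (Multiset.map ev Finset.univ.val)).prod := by
    rw [Multiset.map_map, Multiset.map_map, ← Finset.prod_eq_multiset_prod,
      ← Finset.prod_eq_multiset_prod]
    simp only [Function.comp]
    rw [← hμ]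
    exact charpoly_eq_prod' hM
  have hms : Multiset.map μ Finset.univ.val = Multiset.map ev Finset.univ.val := by
    have h := congrArg Polynomial.roots hprod
    rwa [Polynomial.roots_multiset_prod_X_sub_C, Polynomial.roots_multiset_prod_X_sub_C] at h
  have hcount : ∀ (p : ℝ → Prop) [DecidablePred p],
      (Finset.univ.filter (fun i : Fin (2*n) => p (μ i))).card
        = (Finset.univ.filter (fun i : Fin n ⊕ Fin n => p (ev i))).card := by
    intro p hp
    have h := congrArg (Multiset.countP p) hms
    rw [Multiset.countP_map, Multiset.countP_map] at h
    exact h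
  -- transfer lemmas
  have transfer_ge : ∀ r : ℝ, (∃ i, r ≤ ev i) → r ≤ μ ⟨0, by omega⟩ := by
    rintro r ⟨i, hi⟩
    have h1 : 0 < (Finset.univ.filter (fun i : Fin n ⊕ Fin n => r ≤ ev i)).card :=
      Finset.card_pos.mpr ⟨i, by simp [hi]⟩
    rw [← hcount (fun t => r ≤ t)] at h1
    obtain ⟨j, hj⟩ := Finset.card_pos.mp h1
    have hj' : r ≤ μ j := (Finset.mem_filter.mp hj).2
    exact hj'.trans (hμa (by simp [Fin.le_def]))
  have transfer_le : ∀ r : ℝ, (∃ i, ev i ≤ r) → μ ⟨2*n - 1, by omega⟩ ≤ r := by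
    rintro r ⟨i, hi⟩
    have h1 : 0 < (Finset.univ.filter (fun i : Fin n ⊕ Fin n => ev i ≤ r)).card :=
      Finset.card_pos.mpr ⟨i, by simp [hi]⟩
    rw [← hcount (fun t => t ≤ r)] at h1
    obtain ⟨j, hj⟩ := Finset.card_pos.mp h1
    have hj' : μ j ≤ r := (Finset.mem_filter.mp hj).2
    refine le_trans (hμa ?_) hj'
    simp [Fin.le_def]; omega
  have transfer_ge2 : ∀ r : ℝ, (∃ i j, i ≠ j ∧ r ≤ ev i ∧ r ≤ ev j) →
      r ≤ μ ⟨1, by omega⟩ := by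
    rintro r ⟨i, j, hij, hi, hj⟩
    have h1 : 1 < (Finset.univ.filter (fun i : Fin n ⊕ Fin n => r ≤ ev i)).card :=
      Finset.one_lt_card.mpr ⟨i, by simp [hi], j, by simp [hj], hij⟩
    rw [← hcount (fun t => r ≤ t)] at h1
    obtain ⟨x, hx, y, hy, hxy⟩ := Finset.one_lt_card.mp h1
    have hx' : r ≤ μ x := (Finset.mem_filter.mp hx).2
    have hy' : r ≤ μ y := (Finset.mem_filter.mp hy).2
    have hne : (x : ℕ) ≠ (y : ℕ) := fun h => hxy (Fin.ext h)
    rcases lt_or_gt_of_ne hne with h | h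
    · exact hy'.trans (hμa (by simp [Fin.le_def]; omega))
    · exact hx'.trans (hμa (by simp [Fin.le_def]; omega))
  have transfer_le2 : ∀ r : ℝ, (∃ i j, i ≠ j ∧ ev i ≤ r ∧ ev j ≤ r) →
      μ ⟨2*n - 2, by omega⟩ ≤ r := by
    rintro r ⟨i, j, hij, hi, hj⟩
    have h1 : 1 < (Finset.univ.filter (fun i : Fin n ⊕ Fin n => ev i ≤ r)).card :=
      Finset.one_lt_card.mpr ⟨i, by simp [hi], j, by simp [hj], hij⟩
    rw [← hcount (fun t => t ≤ r)] at h1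
    obtain ⟨x, hx, y, hy, hxy⟩ := Finset.one_lt_card.mp h1
    have hx' : μ x ≤ r := (Finset.mem_filter.mp hx).2
    have hy' : μ y ≤ r := (Finset.mem_filter.mp hy).2
    have hne : (x : ℕ) ≠ (y : ℕ) := fun h => hxy (Fin.ext h)
    rcases lt_or_gt_of_ne hne with h | h
    · refine le_trans (hμa ?_) hx'
      simp [Fin.le_def]; omega
    · refine le_trans (hμa ?_) hy'
      simp [Fin.le_def]; omega
  -- numeric setup
  have hnR : (0:ℝ) < n := by exact_mod_cast hn
  have haR : (0:ℝ) ≤ a := Nat.cast_nonneg a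
  set c1 : ℝ := (2 * (e : ℝ) + a) / n with hc1def
  set c2 : ℝ := (2 * (e : ℝ) - a) / n with hc2def
  have hc1 : c1 * n = 2*(e:ℝ) + a := div_mul_cancel₀ _ (ne_of_gt hnR)
  have hc2 : c2 * n = 2*(e:ℝ) - a := div_mul_cancel₀ _ (ne_of_gt hnR)
  have hc21 : c2 ≤ c1 := by nlinarith [hc1, hc2, hnR]
  set z : ℝ → ℝ → (Fin n ⊕ Fin n → ℝ) := fun p q => Sum.elim (fun _ => p) (fun _ => q)
    with hzdef
  have hsum : ∀ (Cm : Matrix (Fin n) (Fin n) ℝ) (p q : ℝ),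
      (fun _ => p : Fin n → ℝ) ⬝ᵥ (Cm *ᵥ (fun _ => q)) = p * q * ∑ i, ∑ j, Cm i j := by
    intro Cm p q
    simp only [dotProduct, Matrix.mulVec]
    calc ∑ i, p * (∑ j, Cm i j * q) = ∑ i, ∑ j, p * q * Cm i j := by
          refine Finset.sum_congr rfl fun i _ => ?_
          rw [Finset.mul_sum]
          exact Finset.sum_congr rfl fun j _ => by ring
      _ = p * q * ∑ i, ∑ j, Cm i j := by
          rw [Finset.mul_sum]
          exact Finset.sum_congr rfl fun i _ => (Finset.mul_sum _ _ _).symm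
  have hBt : ∑ i, ∑ j, (Bᵀ) i j = (a : ℝ) := by
    simp only [Matrix.transpose_apply]
    rw [Finset.sum_comm]
    simpa [Matrix.transpose_apply] using ha
  have hQ : ∀ p q : ℝ, (z p q) ⬝ᵥ (M *ᵥ (z p q)) = 2*(e:ℝ)*(p^2+q^2) + 2*(a:ℝ)*(p*q) := by
    intro p q
    have h1 : M *ᵥ (z p q) = Sum.elim (A *ᵥ (fun _ => p) + B *ᵥ (fun _ => q))
        (Bᵀ *ᵥ (fun _ => p) + A *ᵥ (fun _ => q)) := Matrix.fromBlocks_mulVec A B Bᵀ A (z p q)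
    rw [h1, show z p q = Sum.elim (fun _ => p) (fun _ => q) from rfl,
      sumElim_dotProduct_sumElim, dotProduct_add, dotProduct_add,
      hsum A p p, hsum B p q, hsum Bᵀ q p, hsum A q q, he, ha, hBt]
    ring
  have hN : ∀ p q : ℝ, (z p q) ⬝ᵥ (z p q) = (n:ℝ)*(p^2+q^2) := by
    intro p q
    rw [show z p q = Sum.elim (fun _ => p) (fun _ => q) from rfl,
      sumElim_dotProduct_sumElim]
    simp [dotProduct, Finset.sum_const, nsmul_eq_mul]
    ring
  obtain ⟨cx, hcxr, hcxQ, hcxN⟩ := eig_expand hM (z 1 1)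
  obtain ⟨cy, hcyr, hcyQ, hcyN⟩ := eig_expand hM (z 1 (-1))
  have hxQ : ∑ i, ev i * cx i ^2 = 4*(e:ℝ) + 2*a := by rw [← hcxQ, hQ]; ring
  have hxN : ∑ i, cx i ^2 = 2*(n:ℝ) := by rw [← hcxN, hN]; ring
  have hyQ : ∑ i, ev i * cy i ^2 = 4*(e:ℝ) - 2*a := by rw [← hcyQ, hQ]; ring
  have hyN : ∑ i, cy i ^2 = 2*(n:ℝ) := by rw [← hcyN, hN]; ring
  have hRx : 0 < ∑ i, cx i ^2 := by rw [hxN]; linarith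
  have hRy : 0 < ∑ i, cy i ^2 := by rw [hyN]; linarith
  have fact1 : ∃ i, c1 ≤ ev i := by
    refine exists_ge ev cx c1 hRx ?_
    rw [hxN, hxQ]
    have h2 : c1 * (2*(n:ℝ)) = 2*(c1 * n) := by ring
    rw [h2, hc1]; linarith
  have fact2 : ∃ i, ev i ≤ c2 := by
    have hneg : ∑ i, -ev i * cy i ^2 = -∑ i, ev i * cy i ^2 := by
      simp [neg_mul]
    obtain ⟨i, hi⟩ := exists_ge (fun i => -ev i) cy (-c2) hRy (by
      rw [hneg, hyN, hyQ]
      have h2 : -c2 * (2*(n:ℝ)) = -(2*(c2 * n)) := by ring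
      rw [h2, hc2]; linarith)
    exact ⟨i, by linarith [hi]⟩
  -- for every index i₀ there is a combination of x and y with zero i₀-coefficient
  have hspan : ∀ i₀ : Fin n ⊕ Fin n, ∃ c : (Fin n ⊕ Fin n) → ℝ, c i₀ = 0 ∧
      (0 < ∑ i, c i ^2) ∧ c2 * (∑ i, c i ^2) ≤ ∑ i, ev i * c i ^2 ∧
      (∑ i, ev i * c i ^2) ≤ c1 * (∑ i, c i ^2) := by
    intro i₀
    by_cases h0 : cx i₀ = 0 ∧ cy i₀ = 0
    · refine ⟨cx, h0.1, hRx, ?_, ?_⟩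
      · rw [hxN, hxQ]
        have h2 : c2 * (2*(n:ℝ)) = 2*(c2 * n) := by ring
        rw [h2, hc2]; linarith
      · rw [hxN, hxQ]
        have h2 : c1 * (2*(n:ℝ)) = 2*(c1 * n) := by ring
        rw [h2, hc1]; linarith
    · set α : ℝ := cy i₀ with hα
      set β : ℝ := -(cx i₀) with hβ
      have hαβ : α ≠ 0 ∨ β ≠ 0 := by
        by_contra hcon
        push_neg at hcon
        exact h0 ⟨neg_eq_zero.mp (hβ.symm.trans hcon.2), hcon.1⟩
      obtain ⟨cv, hcvr, hvQ', hvN'⟩ := eig_expand hM (z (α+β) (α-β))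
      have hvQ : ∑ i, ev i * cv i ^2
          = 2*(e:ℝ)*((α+β)^2+(α-β)^2) + 2*(a:ℝ)*((α+β)*(α-β)) := by rw [← hvQ', hQ]
      have hvN : ∑ i, cv i ^2 = (n:ℝ)*((α+β)^2+(α-β)^2) := by rw [← hvN', hN]
      have hlin : cv i₀ = α * cx i₀ + β * cy i₀ := by
        rw [← hcvr, ← hcxr, ← hcyr]
        have hz2 : z (α+β) (α-β) = α • (z 1 1) + β • (z 1 (-1)) := by
          funext s
          rcases s with s | s <;> simp [z] <;> ring
        rw [hz2]
        have hsymm : (WithLp.equiv 2 ((Fin n ⊕ Fin n) → ℝ)).symm (α • (z 1 1) + β • (z 1 (-1)))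
            = α • (WithLp.equiv 2 ((Fin n ⊕ Fin n) → ℝ)).symm (z 1 1)
              + β • (WithLp.equiv 2 ((Fin n ⊕ Fin n) → ℝ)).symm (z 1 (-1)) := rfl
        rw [hsymm, map_add, _root_.map_smul, _root_.map_smul]
        simp [PiLp.add_apply, PiLp.smul_apply, smul_eq_mul]
      have hc0 : cv i₀ = 0 := by rw [hlin, hα, hβ]; ring
      have hposT : 0 < (α+β)^2+(α-β)^2 := by
        rcases hαβ with h | h
        · have h2 : 0 < α^2 := lt_of_le_of_ne (sq_nonneg α) (Ne.symm (pow_ne_zero 2 h))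
          nlinarith [sq_nonneg β]
        · have h2 : 0 < β^2 := lt_of_le_of_ne (sq_nonneg β) (Ne.symm (pow_ne_zero 2 h))
          nlinarith [sq_nonneg α]
      have hRv : 0 < ∑ i, cv i ^2 := by rw [hvN]; exact mul_pos hnR hposT
      refine ⟨cv, hc0, hRv, ?_, ?_⟩
      · rw [hvN, hvQ]
        have h2 : c2 * ((n:ℝ)*((α+β)^2+(α-β)^2)) = (c2 * n) * ((α+β)^2+(α-β)^2) := by ring
        rw [h2, hc2]
        nlinarith [mul_nonneg haR (sq_nonneg α)]
      · rw [hvN, hvQ]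
        have h2 : c1 * ((n:ℝ)*((α+β)^2+(α-β)^2)) = (c1 * n) * ((α+β)^2+(α-β)^2) := by ring
        rw [h2, hc1]
        nlinarith [mul_nonneg haR (sq_nonneg β)]
  have fact3 : ∃ i j, i ≠ j ∧ c2 ≤ ev i ∧ c2 ≤ ev j := by
    by_contra h
    obtain ⟨i₀, hi₀⟩ : ∃ i, c2 ≤ ev i := by
      refine exists_ge ev cy c2 hRy ?_
      rw [hyN, hyQ]
      have h2 : c2 * (2*(n:ℝ)) = 2*(c2 * n) := by ring
      rw [h2, hc2]; linarith
    obtain ⟨c, hc0, hcR, hclow, _⟩ := hspan i₀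
    obtain ⟨i, hii₀, hige⟩ := two_ge ev c c2 i₀ hc0 hcR hclow
    exact h ⟨i, i₀, hii₀, hige, hi₀⟩
  have fact4 : ∃ i j, i ≠ j ∧ ev i ≤ c1 ∧ ev j ≤ c1 := by
    by_contra h
    obtain ⟨i₀, hi₀'⟩ := fact2
    have hi₀ : ev i₀ ≤ c1 := le_trans hi₀' hc21
    obtain ⟨c, hc0, hcR, _, hchigh⟩ := hspan i₀
    have hneg : ∑ i, -ev i * c i ^2 = -∑ i, ev i * c i ^2 := by simp [neg_mul]
    obtain ⟨i, hii₀, hile⟩ := two_ge (fun i => -ev i) c (-c1) i₀ hc0 hcR (by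
      rw [hneg]; linarith)
    exact h ⟨i, i₀, hii₀, by linarith [hile], hi₀⟩
  exact ⟨⟨transfer_le2 _ fact4, transfer_ge _ fact1⟩,
    ⟨transfer_le _ fact2, transfer_ge2 _ fact3⟩⟩
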